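/- In the two-agent manipulation setting, let S = {a₁,…,a_k} ⊆ O with a₁ ≻₂ a₂ ≻₂ ⋯ ≻₂ a_k. If S is achievable by agent 1, then under any canonical report for S, agent 1's allocation includes S. -/

import Mathlib

/-- Sequential allocation: process the picking sequence in order; at each step the
agent whose turn it is receives his most-preferred (earliest in his ranking list)
item among those not yet allocated. Returns each agent's allocation. -/
def seqAlloc {A I : Type*} [DecidableEq A] [DecidableEq I]
    (prefs : A → List I) : List A → Finset I → A → Finset I
  | [], _ => fun _ => ∅
  | a :: rest, rem =>
    match (prefs a).find? (fun o => decide (o ∈ rem)) with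
    | none => seqAlloc prefs rest rem
    | some o => fun j =>
        if j = a then insert o (seqAlloc prefs rest (rem.erase o) j)
        else seqAlloc prefs rest (rem.erase o) j

/-- A report (strict linear order) over the item set `O`, given as a ranking list:
most preferred item first. -/
def IsReport {I : Type*} [DecidableEq I] (O : Finset I) (p : List I) : Prop :=
  p.Nodup ∧ ∀ o, o ∈ p ↔ o ∈ O

/-- Two-agent sequential allocation: agent `0` ("agent 1") reports `p1`,
agent `1` ("agent 2") reports `p2`. -/
def alloc2 {I : Type*} [DecidableEq I] (p1 p2 : List I)
    (π : List (Fin 2)) (O : Finset I) : Fin 2 → Finset I :=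
  seqAlloc (fun a => if a = 0 then p1 else p2) π O

/-- `S` is achievable by agent 1: some report gives agent 1 an allocation including `S`. -/
def Achievable {I : Type*} [DecidableEq I] (p2 : List I) (π : List (Fin 2))
    (O : Finset I) (S : Finset I) : Prop :=
  ∃ p1, IsReport O p1 ∧ S ⊆ alloc2 p1 p2 π O 0

/-- `o` is strictly preferred to `o'` in the ranking list `p`. -/
def Prefers {I : Type*} [DecidableEq I] (p : List I) (o o' : I) : Prop :=
  p.idxOf o < p.idxOf o'

instance {I : Type*} [DecidableEq I] (p : List I) (o o' : I) : Decidable (Prefers p o o') :=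
  inferInstanceAs (Decidable (_ < _))

/-- `u` is an additive utility consistent with the ranking `p` on item set `O`. -/
def Consistent {I : Type*} [DecidableEq I] (O : Finset I) (p : List I) (u : I → ℝ) : Prop :=
  (∀ o ∈ O, 0 < u o) ∧ ∀ o ∈ O, ∀ o' ∈ O, u o' < u o ↔ Prefers p o o'

section Aux
variable {I : Type*} [DecidableEq I]

lemma seqAlloc_subset {A : Type*} [DecidableEq A] (prefs : A → List I) :
    ∀ (π : List A) (rem : Finset I) (j : A), seqAlloc prefs π rem j ⊆ rem
  | [], rem, j => by simp [seqAlloc]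
  | a :: rest, rem, j => by
    rw [seqAlloc]
    cases hf : (prefs a).find? (fun o => decide (o ∈ rem)) with
    | none => exact seqAlloc_subset prefs rest rem j
    | some o =>
      have ho : o ∈ rem := by simpa using List.find?_some hf
      by_cases hj : j = a
      · subst hj
        simp only [if_pos rfl]
        intro x hx
        rcases Finset.mem_insert.mp hx with h | h
        · exact h ▸ ho
        · exact Finset.erase_subset _ _ (seqAlloc_subset prefs rest _ j h)
      · simp only [if_neg hj]
        exact (seqAlloc_subset prefs rest _ j).trans (Finset.erase_subset _ _)

lemma find?_lt {p : List I} {P : I → Bool} {o u : I}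
    (ho : p.find? P = some o) (hu : u ∈ p) (hPu : P u = true) (hne : u ≠ o) :
    p.idxOf o < p.idxOf u := by
  induction p with
  | nil => simp at hu
  | cons x tl ih =>
    by_cases hx : P x = true
    · rw [List.find?_cons_of_pos hx] at ho
      injection ho with ho; subst ho
      have hux : u ≠ x := hne
      rw [List.idxOf_cons_self, List.idxOf_cons_ne _ (Ne.symm hux)]
      omega
    · rw [List.find?_cons_of_neg (by simpa using hx)] at ho
      have hox : o ≠ x := by
        rintro rfl
        exact hx (List.find?_some ho)
      have hux : u ≠ x := by rintro rfl; exact hx hPu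
      have hu' : u ∈ tl := by
        rcases List.mem_cons.mp hu with h | h
        · exact absurd h hux
        · exact h
      rw [List.idxOf_cons_ne _ (Ne.symm hox), List.idxOf_cons_ne _ (Ne.symm hux)]
      have := ih ho hu'
      omega

lemma find?_prefix (c t : List I) (a : I) (rem : Finset I)
    (hc : ∀ x ∈ c, x ∉ rem) (ha : a ∈ rem) :
    (c ++ a :: t).find? (fun x => decide (x ∈ rem)) = some a := by
  induction c with
  | nil => simp [List.find?_cons_of_pos, ha]
  | cons x c' ih =>
    have hx : x ∉ rem := hc x (by simp)
    rw [List.cons_append, List.find?_cons_of_neg (by simpa using hx)]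
    exact ih (fun y hy => hc y (by simp [hy]))

lemma find?_swap (p : List I) (rem : Finset I) (u v o : I)
    (ho : p.find? (fun x => decide (x ∈ rem)) = some o) (hou : o ≠ u) :
    p.find? (fun x => decide (x ∈ insert v (rem.erase u))) = some o ∨
      (p.idxOf v < p.idxOf o ∧
        p.find? (fun x => decide (x ∈ insert v (rem.erase u))) = some v) := by
  induction p with
  | nil => simp at ho
  | cons x tl ih =>
    by_cases hx : x ∈ rem
    · rw [List.find?_cons_of_pos (by simpa using hx)] at ho
      injection ho with ho; subst ho
      left
      have : x ∈ insert v (rem.erase u) := by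
        exact Finset.mem_insert_of_mem (Finset.mem_erase.mpr ⟨hou, hx⟩)
      rw [List.find?_cons_of_pos (by simpa using this)]
    · rw [List.find?_cons_of_neg (by simpa using hx)] at ho
      have hox : o ≠ x := by
        rintro rfl
        exact hx (by simpa using List.find?_some ho)
      by_cases hxv : x = v
      · subst hxv
        right
        have : x ∈ insert x (rem.erase u) := Finset.mem_insert_self _ _
        rw [List.find?_cons_of_pos (by simpa using this)]
        refine ⟨?_, rfl⟩
        rw [List.idxOf_cons_self, List.idxOf_cons_ne _ (Ne.symm hox)]
        omega
      · have hx2 : x ∉ insert v (rem.erase u) := by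
          simp only [Finset.mem_insert, Finset.mem_erase]
          rintro (rfl | ⟨-, h⟩)
          · exact hxv rfl
          · exact hx h
        rw [List.find?_cons_of_neg (by simpa using hx2)]
        rcases ih ho with h | ⟨hlt, hfind⟩
        · exact Or.inl h
        · right
          refine ⟨?_, hfind⟩
          rw [List.idxOf_cons_ne _ (fun h : x = v => hxv h),
              List.idxOf_cons_ne _ (Ne.symm hox)]
          omega
end Aux

/-- Agent 1 can secure `S` from state `(π, rem)` via some sequence of picks,
with agent 2 playing greedily according to `p2`. -/
def Ach {I : Type*} [DecidableEq I] (p2 : List I) :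
    List (Fin 2) → Finset I → Finset I → Prop
  | [], _, S => S = ∅
  | a :: rest, rem, S =>
    if a = 0 then ∃ y ∈ rem, Ach p2 rest (rem.erase y) (S.erase y)
    else
      match p2.find? (fun o => decide (o ∈ rem)) with
      | none => Ach p2 rest rem S
      | some o => o ∉ S ∧ Ach p2 rest (rem.erase o) S

section Aux2
variable {I : Type*} [DecidableEq I]

lemma ach_mono (p2 : List I) :
    ∀ (π : List (Fin 2)) (rem S S' : Finset I), Ach p2 π rem S → S' ⊆ S → Ach p2 π rem S'
  | [], rem, S, S', h, hsub => by
    rw [Ach] at h ⊢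
    subst h
    exact Finset.subset_empty.mp hsub
  | a :: rest, rem, S, S', h, hsub => by
    rw [Ach] at h ⊢
    by_cases ha : a = 0
    · rw [if_pos ha] at h ⊢
      obtain ⟨y, hy, h⟩ := h
      exact ⟨y, hy, ach_mono p2 rest _ _ _ h (Finset.erase_subset_erase _ hsub)⟩
    · rw [if_neg ha] at h ⊢
      cases hf : p2.find? (fun o => decide (o ∈ rem)) with
      | none => rw [hf] at h; exact ach_mono p2 rest _ _ _ h hsub
      | some o =>
        rw [hf] at h
        exact ⟨fun hx => h.1 (hsub hx), ach_mono p2 rest _ _ _ h.2 hsub⟩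
end Aux2

section Aux3
variable {I : Type*} [DecidableEq I] {O : Finset I} {p2 : List I}

lemma ach_weak (hp2 : IsReport O p2) (π : List (Fin 2)) :
    ∀ (rem T : Finset I) (u v : I),
      Ach p2 π rem T → u ∈ T → u ∈ rem → v ∉ rem → v ∉ T → rem ⊆ O →
      Ach p2 π (insert v (rem.erase u)) (T.erase u) := by
  induction π with
  | nil =>
    intro rem T u v h hu _ _ _ _
    rw [Ach] at h
    exact absurd (h ▸ hu) (Finset.notMem_empty u)
  | cons a rest ih =>
    intro rem T u v h huT hur hvr hvT hO
    rw [Ach] at h ⊢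
    by_cases ha : a = 0
    · rw [if_pos ha] at h ⊢
      obtain ⟨y, hy, hrec⟩ := h
      by_cases hyu : y = u
      · subst hyu
        refine ⟨v, Finset.mem_insert_self _ _, ?_⟩
        have e1 : (insert v (rem.erase y)).erase v = rem.erase y :=
          Finset.erase_insert (fun hh => hvr (Finset.mem_of_mem_erase hh))
        have e2 : (T.erase y).erase v = T.erase y :=
          Finset.erase_eq_of_notMem (fun hh => hvT (Finset.mem_of_mem_erase hh))
        rw [e1, e2]
        exact hrec
      · have hyv : y ≠ v := fun h => hvr (h ▸ hy)
        refine ⟨y, Finset.mem_insert_of_mem (Finset.mem_erase.mpr ⟨hyu, hy⟩), ?_⟩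
        rw [Finset.erase_insert_of_ne (Ne.symm hyv), Finset.erase_right_comm,
            show (T.erase u).erase y = (T.erase y).erase u from Finset.erase_right_comm]
        exact ih (rem.erase y) (T.erase y) u v hrec
          (Finset.mem_erase.mpr ⟨Ne.symm hyu, huT⟩)
          (Finset.mem_erase.mpr ⟨Ne.symm hyu, hur⟩)
          (fun hh => hvr (Finset.mem_of_mem_erase hh))
          (fun hh => hvT (Finset.mem_of_mem_erase hh))
          ((Finset.erase_subset _ _).trans hO)
    · rw [if_neg ha] at h ⊢
      cases hf : p2.find? (fun o => decide (o ∈ rem)) with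
      | none =>
        exfalso
        have := List.find?_eq_none.mp hf u ((hp2.2 u).mpr (hO hur))
        simp only [decide_eq_true_eq] at this
        exact this hur
      | some o =>
        rw [hf] at h
        obtain ⟨hoT, hrec⟩ := h
        have ho : o ∈ rem := by simpa using List.find?_some hf
        have hou : o ≠ u := fun hh => hoT (hh ▸ huT)
        have hov : o ≠ v := fun hh => hvr (hh ▸ ho)
        rcases find?_swap p2 rem u v o hf hou with hs | ⟨_, hs⟩
        · rw [hs]
          refine ⟨fun hx => hoT (Finset.mem_of_mem_erase hx), ?_⟩
          rw [Finset.erase_insert_of_ne (Ne.symm hov), Finset.erase_right_comm]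
          exact ih (rem.erase o) T u v hrec huT
            (Finset.mem_erase.mpr ⟨Ne.symm hou, hur⟩)
            (fun hh => hvr (Finset.mem_of_mem_erase hh)) hvT
            ((Finset.erase_subset _ _).trans hO)
        · rw [hs]
          refine ⟨fun hx => hvT (Finset.mem_of_mem_erase hx), ?_⟩
          rw [Finset.erase_insert (by simp only [Finset.mem_erase]; tauto)]
          have h2 := ih (rem.erase o) T u o hrec huT
            (Finset.mem_erase.mpr ⟨Ne.symm hou, hur⟩)
            (Finset.notMem_erase _ _) hoT
            ((Finset.erase_subset _ _).trans hO)
          rwa [Finset.erase_right_comm,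
            Finset.insert_erase (Finset.mem_erase.mpr ⟨hou, ho⟩)] at h2

lemma ach_strong (hp2 : IsReport O p2) (π : List (Fin 2)) :
    ∀ (rem T : Finset I) (u v : I),
      Ach p2 π rem T → u ∈ T → u ∈ rem → v ∉ rem → Prefers p2 u v → rem ⊆ O →
      Ach p2 π (insert v (rem.erase u)) (insert v (T.erase u)) := by
  induction π with
  | nil =>
    intro rem T u v h hu _ _ _ _
    rw [Ach] at h
    exact absurd (h ▸ hu) (Finset.notMem_empty u)
  | cons a rest ih =>
    intro rem T u v h huT hur hvr hpref hO
    have huv : u ≠ v := by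
      intro hh; rw [Prefers, hh] at hpref; omega
    rw [Ach] at h ⊢
    by_cases ha : a = 0
    · rw [if_pos ha] at h ⊢
      obtain ⟨y, hy, hrec⟩ := h
      by_cases hyu : y = u
      · subst hyu
        refine ⟨v, Finset.mem_insert_self _ _, ?_⟩
        have e1 : (insert v (rem.erase y)).erase v = rem.erase y :=
          Finset.erase_insert (fun hh => hvr (Finset.mem_of_mem_erase hh))
        rw [e1, Finset.erase_insert_eq_erase]
        exact ach_mono p2 rest _ _ _ hrec (Finset.erase_subset _ _)
      · have hyv : y ≠ v := fun h => hvr (h ▸ hy)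
        refine ⟨y, Finset.mem_insert_of_mem (Finset.mem_erase.mpr ⟨hyu, hy⟩), ?_⟩
        rw [Finset.erase_insert_of_ne (Ne.symm hyv), Finset.erase_right_comm,
            show (insert v (T.erase u)).erase y = insert v ((T.erase y).erase u) by
              rw [Finset.erase_insert_of_ne (Ne.symm hyv), Finset.erase_right_comm]]
        exact ih (rem.erase y) (T.erase y) u v hrec
          (Finset.mem_erase.mpr ⟨Ne.symm hyu, huT⟩)
          (Finset.mem_erase.mpr ⟨Ne.symm hyu, hur⟩)
          (fun hh => hvr (Finset.mem_of_mem_erase hh)) hpref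
          ((Finset.erase_subset _ _).trans hO)
    · rw [if_neg ha] at h ⊢
      cases hf : p2.find? (fun o => decide (o ∈ rem)) with
      | none =>
        exfalso
        have := List.find?_eq_none.mp hf u ((hp2.2 u).mpr (hO hur))
        simp only [decide_eq_true_eq] at this
        exact this hur
      | some o =>
        rw [hf] at h
        obtain ⟨hoT, hrec⟩ := h
        have ho : o ∈ rem := by simpa using List.find?_some hf
        have hou : o ≠ u := fun hh => hoT (hh ▸ huT)
        have hov : o ≠ v := fun hh => hvr (hh ▸ ho)
        rcases find?_swap p2 rem u v o hf hou with hs | ⟨hlt, hs⟩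
        · rw [hs]
          refine ⟨?_, ?_⟩
          · simp only [Finset.mem_insert, Finset.mem_erase]
            rintro (rfl | ⟨-, hh⟩)
            · exact hov rfl
            · exact hoT hh
          · rw [Finset.erase_insert_of_ne (Ne.symm hov), Finset.erase_right_comm]
            exact ih (rem.erase o) T u v hrec huT
              (Finset.mem_erase.mpr ⟨Ne.symm hou, hur⟩)
              (fun hh => hvr (Finset.mem_of_mem_erase hh)) hpref
              ((Finset.erase_subset _ _).trans hO)
        · exfalso
          have h1 : p2.idxOf o < p2.idxOf u :=
            find?_lt hf ((hp2.2 u).mpr (hO hur)) (by simpa using hur) (Ne.symm hou)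
          have h2 : p2.idxOf u < p2.idxOf v := hpref
          omega

end Aux3

section Aux4
variable {I : Type*} [DecidableEq I] {O : Finset I} {p1 p2 : List I}

lemma ach_of_report (hp1 : IsReport O p1) (hp2 : IsReport O p2) (π : List (Fin 2)) :
    ∀ (rem S : Finset I), π.length ≤ rem.card → rem ⊆ O →
      S ⊆ seqAlloc (fun a => if a = 0 then p1 else p2) π rem 0 → Ach p2 π rem S := by
  induction π with
  | nil =>
    intro rem S _ _ hsub
    rw [Ach]
    exact Finset.subset_empty.mp (by simpa [seqAlloc] using hsub)
  | cons a rest ih =>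
    intro rem S hlen hO hsub
    have hpos : 0 < rem.card := lt_of_lt_of_le (by simp) hlen
    rw [seqAlloc] at hsub
    rw [Ach]
    by_cases ha : a = 0
    · subst ha
      simp only [eq_self_iff_true, if_true] at hsub ⊢
      cases hf : p1.find? (fun o => decide (o ∈ rem)) with
      | none =>
        exfalso
        obtain ⟨x, hx⟩ := Finset.card_pos.mp hpos
        have := List.find?_eq_none.mp hf x ((hp1.2 x).mpr (hO hx))
        simp only [decide_eq_true_eq] at this
        exact this hx
      | some y =>
        rw [hf] at hsub
        have hy : y ∈ rem := by simpa using List.find?_some hf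
        simp only [eq_self_iff_true, if_true] at hsub
        refine ⟨y, hy, ?_⟩
        apply ih
        · rw [Finset.card_erase_of_mem hy]
          simp only [List.length_cons] at hlen
          omega
        · exact (Finset.erase_subset _ _).trans hO
        · intro x hx
          have hx' := Finset.mem_erase.mp hx
          rcases Finset.mem_insert.mp (hsub hx'.2) with h | h
          · exact absurd h hx'.1
          · exact h
    · simp only [if_neg ha] at hsub ⊢
      cases hf : p2.find? (fun o => decide (o ∈ rem)) with
      | none =>
        exfalso
        obtain ⟨x, hx⟩ := Finset.card_pos.mp hpos
        have := List.find?_eq_none.mp hf x ((hp2.2 x).mpr (hO hx))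
        simp only [decide_eq_true_eq] at this
        exact this hx
      | some o =>
        rw [hf] at hsub
        have ho : o ∈ rem := by simpa using List.find?_some hf
        have h0a : ¬ ((0 : Fin 2) = a) := fun h => ha h.symm
        simp only [if_neg h0a] at hsub
        have hS : S ⊆ rem.erase o := hsub.trans (seqAlloc_subset _ _ _ _)
        refine ⟨fun hx => (Finset.mem_erase.mp (hS hx)).1 rfl, ?_⟩
        apply ih
        · rw [Finset.card_erase_of_mem ho]
          simp only [List.length_cons] at hlen
          omega
        · exact (Finset.erase_subset _ _).trans hO
        · exact hsub

lemma ach_main (hp2 : IsReport O p2) (r t : List I) (π : List (Fin 2)) :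
    ∀ (rem : Finset I) (as c : List I),
      as.Nodup → (∀ o ∈ as, o ∈ rem) → as.Pairwise (Prefers p2) → rem ⊆ O →
      (∀ x ∈ c, x ∉ rem) → r = c ++ as ++ t →
      Ach p2 π rem as.toFinset →
      as.toFinset ⊆ seqAlloc (fun a => if a = 0 then r else p2) π rem 0 := by
  induction π with
  | nil =>
    intro rem as c _ _ _ _ _ _ hach
    rw [Ach] at hach
    rw [hach]
    exact Finset.empty_subset _
  | cons a rest ih =>
    intro rem as c hnd hsub hsort hO hc hr hach
    rw [Ach] at hach
    rw [seqAlloc]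
    by_cases ha : a = 0
    · subst ha
      rw [if_pos rfl] at hach
      match as, hnd, hsub, hsort, hr, hach with
      | [], _, _, _, _, _ => simp
      | hd :: tl, hnd, hsub, hsort, hr, hach =>
        have hhd : hd ∈ rem := hsub hd (by simp)
        have hhdtl : hd ∉ tl := (List.nodup_cons.mp hnd).1
        have hfind : r.find? (fun x => decide (x ∈ rem)) = some hd := by
          rw [hr, show c ++ (hd :: tl) ++ t = c ++ hd :: (tl ++ t) by simp]
          exact find?_prefix c (tl ++ t) hd rem hc hhd
        simp only [eq_self_iff_true, if_true]
        rw [hfind]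
        simp only [eq_self_iff_true, if_true]
        have key : Ach p2 rest (rem.erase hd) tl.toFinset := by
          obtain ⟨y, hy, hrec⟩ := hach
          have hTcons : (hd :: tl).toFinset = insert hd tl.toFinset := by simp
          by_cases hyhd : y = hd
          · subst hyhd
            rwa [hTcons, Finset.erase_insert (by simpa using hhdtl)] at hrec
          · have hhdT : hd ∈ (hd :: tl).toFinset.erase y :=
              Finset.mem_erase.mpr ⟨fun h => hyhd h.symm, by simp⟩
            have hhdrem : hd ∈ rem.erase y :=
              Finset.mem_erase.mpr ⟨fun h => hyhd h.symm, hhd⟩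
            have hOy : rem.erase y ⊆ O := (Finset.erase_subset _ _).trans hO
            have e1 : insert y ((rem.erase y).erase hd) = rem.erase hd := by
              rw [Finset.erase_right_comm,
                Finset.insert_erase (Finset.mem_erase.mpr ⟨hyhd, hy⟩)]
            by_cases hytl : y ∈ tl
            · have hpref : Prefers p2 hd y := (List.pairwise_cons.mp hsort).1 y hytl
              have h2 := ach_strong hp2 rest (rem.erase y) ((hd :: tl).toFinset.erase y)
                hd y hrec hhdT hhdrem (Finset.notMem_erase _ _) hpref hOy
              rw [e1] at h2
              have e2 : insert y (((hd :: tl).toFinset.erase y).erase hd) = tl.toFinset := by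
                rw [Finset.erase_right_comm, hTcons,
                  Finset.erase_insert (by simpa using hhdtl),
                  Finset.insert_erase (by simpa using hytl)]
              rwa [e2] at h2
            · have hyT : y ∉ (hd :: tl).toFinset := by
                simp only [List.toFinset_cons, Finset.mem_insert, List.mem_toFinset]
                rintro (rfl | h)
                · exact hyhd rfl
                · exact hytl h
              rw [Finset.erase_eq_of_notMem hyT] at hrec
              have h2 := ach_weak hp2 rest (rem.erase y) ((hd :: tl).toFinset)
                hd y hrec (by simp) hhdrem (Finset.notMem_erase _ _) hyT hOy
              rw [e1] at h2
              rwa [hTcons, Finset.erase_insert (by simpa using hhdtl)] at h2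
        have htail := ih (rem.erase hd) tl (c ++ [hd]) (List.nodup_cons.mp hnd).2
          (fun o ho => Finset.mem_erase.mpr
            ⟨fun h => hhdtl (h ▸ ho), hsub o (List.mem_cons_of_mem _ ho)⟩)
          (List.Pairwise.of_cons hsort)
          ((Finset.erase_subset _ _).trans hO)
          (by
            intro x hx
            rcases List.mem_append.mp hx with h | h
            · exact fun hm => hc x h (Finset.mem_of_mem_erase hm)
            · simp only [List.mem_singleton] at h
              exact h ▸ Finset.notMem_erase _ _)
          (by rw [hr]; simp)
          key
        intro x hx
        simp only [List.toFinset_cons, Finset.mem_insert, List.mem_toFinset] at hx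
        rcases hx with rfl | hx
        · exact Finset.mem_insert_self _ _
        · exact Finset.mem_insert_of_mem (htail (by simpa using hx))
    · rw [if_neg ha] at hach
      simp only [if_neg ha]
      cases hf : p2.find? (fun o => decide (o ∈ rem)) with
      | none =>
        rw [hf] at hach
        exact ih rem as c hnd hsub hsort hO hc hr hach
      | some o =>
        rw [hf] at hach
        obtain ⟨hoS, hrec⟩ := hach
        have h0a : ¬ ((0 : Fin 2) = a) := fun h => ha h.symm
        simp only [if_neg h0a]
        exact ih (rem.erase o) as c hnd
          (fun o' ho' => Finset.mem_erase.mpr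
            ⟨fun h => hoS (h ▸ List.mem_toFinset.mpr ho'), hsub o' ho'⟩)
          hsort ((Finset.erase_subset _ _).trans hO)
          (fun x hx hm => hc x hx (Finset.mem_of_mem_erase hm)) hr hrec

end Aux4


/-- Let `S = {a₁, …, a_k}` with `a₁ ≻₂ a₂ ≻₂ ⋯ ≻₂ a_k`
(given as the list `as`, ≻₂-most-preferred first). If `S` is achievable by
agent 1, then under any canonical report for `S` (a report whose top `k` items
are `a₁, …, a_k` in this order), agent 1's allocation includes `S`. -/
theorem statement1 {I : Type*} [DecidableEq I]
    (O : Finset I) (π : List (Fin 2)) (hπ : π.length = O.card)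
    (p2 : List I) (hp2 : IsReport O p2)
    (as : List I) (hnd : as.Nodup) (hasO : ∀ o ∈ as, o ∈ O)
    (hsorted : as.Pairwise (Prefers p2))
    (hach : Achievable p2 π O as.toFinset)
    (r : List I) (hr : IsReport O r) (hpre : as <+: r) :
    as.toFinset ⊆ alloc2 r p2 π O 0 := by
  obtain ⟨p1, hp1, hall⟩ := hach
  have hall' : as.toFinset ⊆ seqAlloc (fun a => if a = 0 then p1 else p2) π O 0 := hall
  have hach' : Ach p2 π O as.toFinset :=
    ach_of_report hp1 hp2 π O as.toFinset (le_of_eq hπ) (subset_refl O) hall'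
  obtain ⟨t, ht⟩ := hpre
  exact ach_main hp2 r t π O as [] hnd hasO hsorted (subset_refl O)
    (by simp) (by rw [← ht]; simp) hach'
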